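/- Let A be a k-algebra with an arbitrary bilinear product, and let 𝔄 be a subspace of the space of coefficient families ℤ → A such that (i) any two α, β ∈ 𝔄 are local of some order, (ii) α(n)β ∈ 𝔄 for all α, β ∈ 𝔄 and n ∈ ℕ, and (iii) ∂α ∈ 𝔄 for all α ∈ 𝔄. Then 𝔄, equipped with the products (n) and with D = ∂, is a conformal algebra: it satisfies (C1) (for all α, β ∈ 𝔄 there is N with α(n)β = 0 for n ≥ N) and (C2) ((∂α)(n)β = −n·(α(n−1)β) for n ≥ 1, (∂α)(0)β = 0, and ∂(α(n)β) = (∂α)(n)β + α(n)(∂β)). -/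
import Mathlib


open Finset

/-- The `n`-th product of coefficient families, for a bilinear product `mul` on `A`:
`(α(n)β)(m) = Σ_{s=0}^n (-1)^s binom(n,s) mul(α(n-s), β(m+s))`. -/
def nprodB {k A : Type} [Field k] [AddCommGroup A] [Module k A]
    (mul : A →ₗ[k] A →ₗ[k] A) (α β : ℤ → A) (n : ℕ) : ℤ → A :=
  fun m => ∑ s ∈ Finset.range (n + 1),
    ((-1 : ℤ) ^ s * (n.choose s : ℤ)) • mul (α ((n : ℤ) - s)) (β (m + s))

/-- The derivation `∂`: `(∂α)(m) = -m·α(m-1)`. -/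
def delOp {A : Type} [AddCommGroup A] (α : ℤ → A) : ℤ → A :=
  fun m => (-m : ℤ) • α (m - 1)

section Aux

variable {k A : Type} [Field k] [AddCommGroup A] [Module k A]
    (mul : A →ₗ[k] A →ₗ[k] A)

lemma mul_zsmul_left (z : ℤ) (a b : A) : mul (z • a) b = z • mul a b := by
  rw [map_zsmul]; rfl

lemma mul_zsmul_right (z : ℤ) (a b : A) : mul a (z • b) = z • mul a b :=
  map_zsmul (mul a) z b

lemma loc_succ (α β : ℤ → A) (N : ℕ)
    (h : ∀ m nn : ℤ, ∑ s ∈ Finset.range (N + 1),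
      ((-1:ℤ)^s * (N.choose s:ℤ)) • mul (α (nn - s)) (β (m + s)) = 0) :
    ∀ m nn : ℤ, ∑ s ∈ Finset.range (N + 1 + 1),
      ((-1:ℤ)^s * ((N+1).choose s:ℤ)) • mul (α (nn - s)) (β (m + s)) = 0 := by
  intro m nn
  have key : ∑ s ∈ Finset.range (N + 1 + 1),
        ((-1:ℤ)^s * ((N+1).choose s:ℤ)) • mul (α (nn - s)) (β (m + s))
      = (∑ s ∈ Finset.range (N+1),
          (-((-1:ℤ)^s * (N.choose s:ℤ))) • mul (α ((nn-1) - s)) (β ((m+1) + s)))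
        + ∑ s ∈ Finset.range (N+1+1),
          ((-1:ℤ)^s * (N.choose s:ℤ)) • mul (α (nn - s)) (β (m + s)) := by
    rw [Finset.sum_range_succ'
      (f := fun s => ((-1:ℤ)^s * ((N+1).choose s:ℤ)) • mul (α (nn - s)) (β (m + s))),
      Finset.sum_range_succ'
      (f := fun s => ((-1:ℤ)^s * (N.choose s:ℤ)) • mul (α (nn - s)) (β (m + s)))]
    have hF : ∑ i ∈ Finset.range (N+1),
          ((-1:ℤ)^(i+1) * ((N+1).choose (i+1):ℤ)) • mul (α (nn - (i+1:ℕ))) (β (m + (i+1:ℕ)))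
        = ∑ i ∈ Finset.range (N+1),
          ((-((-1:ℤ)^i * (N.choose i:ℤ))) • mul (α ((nn-1) - i)) (β ((m+1) + i))
            + ((-1:ℤ)^(i+1) * (N.choose (i+1):ℤ)) • mul (α (nn - (i+1:ℕ))) (β (m + (i+1:ℕ)))) := by
      refine Finset.sum_congr rfl fun i hi => ?_
      have h1 : nn - ((i+1:ℕ):ℤ) = (nn-1) - i := by push_cast; ring
      have h2 : m + ((i+1:ℕ):ℤ) = (m+1) + i := by push_cast; ring
      rw [h1, h2, ← add_smul]
      congr 1
      rw [Nat.choose_succ_succ]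
      push_cast
      ring
    rw [hF, Finset.sum_add_distrib]
    simp [Nat.choose_zero_right]
    abel
  rw [key]
  simp only [neg_smul, Finset.sum_neg_distrib]
  rw [h (m+1) (nn-1), neg_zero, zero_add, Finset.sum_range_succ]
  simp only [Nat.choose_succ_self, Nat.cast_zero, mul_zero, zero_smul, add_zero]
  exact h m nn

lemma part3 (α β : ℤ → A) : nprodB mul (delOp α) β 0 = 0 := by
  funext m
  simp [nprodB, delOp]

lemma part2 (α β : ℤ → A) (n : ℕ) :
    nprodB mul (delOp α) β (n + 1) = (-(n + 1) : ℤ) • nprodB mul α β n := by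
  funext m
  show _ = (-(n+1):ℤ) • nprodB mul α β n m
  unfold nprodB delOp
  rw [Finset.sum_range_succ, Finset.smul_sum]
  have hz : ((n + 1 : ℕ) : ℤ) - ((n+1 : ℕ) : ℤ) = 0 := by push_cast; ring
  rw [hz]
  simp only [neg_zero, zero_smul, map_zero, LinearMap.zero_apply, smul_zero, add_zero]
  refine Finset.sum_congr rfl fun s hs => ?_
  rw [Finset.mem_range] at hs
  have hs' : s ≤ n := Nat.lt_succ_iff.mp hs
  rw [mul_zsmul_left, smul_smul, smul_smul]
  have harg : ((n+1:ℕ):ℤ) - s - 1 = (n:ℤ) - s := by push_cast; ring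
  rw [harg]
  congr 1
  have h := Nat.choose_mul_succ_eq n s
  zify [show s ≤ n+1 by omega] at h
  push_cast
  linear_combination ((-1:ℤ)^s) * h

lemma part4 (α β : ℤ → A) (n : ℕ) :
    delOp (nprodB mul α β n) = nprodB mul (delOp α) β n + nprodB mul α (delOp β) n := by
  funext m
  show delOp (nprodB mul α β n) m = nprodB mul (delOp α) β n m + nprodB mul α (delOp β) n m
  unfold nprodB delOp
  simp only [mul_zsmul_left, mul_zsmul_right, smul_smul, Finset.smul_sum]
  have main : ∑ s ∈ Finset.range (n+1),
        (((-1:ℤ)^s * (n.choose s:ℤ)) * s) • mul (α ((n:ℤ)-s)) (β (m-1+s))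
      = ∑ s ∈ Finset.range (n+1),
        (((-1:ℤ)^s * (n.choose s:ℤ)) * (-((n:ℤ)-s))) • mul (α ((n:ℤ)-s-1)) (β (m+s)) := by
    rw [Finset.sum_range_succ', Finset.sum_range_succ]
    simp only [Nat.cast_zero, mul_zero, zero_smul, add_zero, sub_self, neg_zero,
      Nat.cast_ofNat]
    refine Finset.sum_congr rfl fun i hi => ?_
    rw [Finset.mem_range] at hi
    have h := Nat.choose_succ_right_eq n i
    zify [Nat.le_of_lt hi] at h
    have h1 : ((n:ℤ)) - (i+1:ℕ) = (n:ℤ) - i - 1 := by push_cast; ring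
    have h2 : m - 1 + ((i+1:ℕ):ℤ) = m + i := by push_cast; ring
    rw [h1, h2]
    congr 1
    push_cast
    linear_combination (-(-1:ℤ)^i) * h
  calc ∑ s ∈ Finset.range (n+1),
        ((-m) * ((-1:ℤ)^s * (n.choose s:ℤ))) • mul (α ((n:ℤ)-s)) (β (m-1+s))
      = ∑ s ∈ Finset.range (n+1),
        ((((-1:ℤ)^s * (n.choose s:ℤ)) * s) • mul (α ((n:ℤ)-s)) (β (m-1+s))
          + (((-1:ℤ)^s * (n.choose s:ℤ)) * (-(m+s))) • mul (α ((n:ℤ)-s)) (β (m-1+s))) := by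
        refine Finset.sum_congr rfl fun s hs => ?_
        rw [← add_smul]
        congr 1
        ring
    _ = _ := by
        rw [Finset.sum_add_distrib, main]
        congr 1
        refine Finset.sum_congr rfl fun s hs => ?_
        congr 2
        ring

end Aux

/-- A space of pairwise local coefficient families closed under all the
`n`-th products and under `∂` is a conformal algebra: it satisfies (C1) and (C2). -/
theorem conformal_algebra_of_series
    {k A : Type} [Field k] [CharZero k] [AddCommGroup A] [Module k A]
    (mul : A →ₗ[k] A →ₗ[k] A) (S : Submodule k (ℤ → A))
    (h1 : ∀ α ∈ S, ∀ β ∈ S, ∃ N : ℕ, ∀ m n : ℤ,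
      ∑ s ∈ Finset.range (N + 1),
        ((-1 : ℤ) ^ s * (N.choose s : ℤ)) • mul (α (n - s)) (β (m + s)) = 0)
    (h2 : ∀ α ∈ S, ∀ β ∈ S, ∀ n : ℕ, nprodB mul α β n ∈ S)
    (h3 : ∀ α ∈ S, delOp α ∈ S) :
    (∀ α ∈ S, ∀ β ∈ S, ∃ N : ℕ, ∀ n : ℕ, N ≤ n → nprodB mul α β n = 0) ∧
    (∀ α ∈ S, ∀ β ∈ S, ∀ n : ℕ,
      nprodB mul (delOp α) β (n + 1) = (-(n + 1) : ℤ) • nprodB mul α β n) ∧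
    (∀ α ∈ S, ∀ β ∈ S, nprodB mul (delOp α) β 0 = 0) ∧
    (∀ α ∈ S, ∀ β ∈ S, ∀ n : ℕ,
      delOp (nprodB mul α β n) = nprodB mul (delOp α) β n + nprodB mul α (delOp β) n) := by
  refine ⟨?_, fun α _ β _ n => part2 mul α β n, fun α _ β _ => part3 mul α β,
    fun α _ β _ n => part4 mul α β n⟩
  intro α hα β hβ
  obtain ⟨N, hN⟩ := h1 α hα β hβ
  refine ⟨N, ?_⟩
  have loc : ∀ n : ℕ, N ≤ n → ∀ m nn : ℤ, ∑ s ∈ Finset.range (n + 1),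
      ((-1:ℤ)^s * (n.choose s:ℤ)) • mul (α (nn - s)) (β (m + s)) = 0 := by
    intro n hn
    induction n, hn using Nat.le_induction with
    | base => exact hN
    | succ n hn ih => exact loc_succ mul α β n ih
  intro n hn
  funext m
  exact loc n hn m (n : ℤ)
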